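/- For any connected graph G with at least 2 vertices, there exist vertices u and v at distance 1 or 2 from each other such that d(u) + d(v) ≤ 2·ad(G), where ad(G) = 2|E(G)|/|V(G)| is the average degree of G. -/

import Mathlib

/-- A Roman dominating function on `G`: labels in `{0,1,2}` and every vertex
labeled `0` has a neighbor labeled `2`. -/
def IsRDF {V : Type*} (G : SimpleGraph V) (f : V → ℕ) : Prop :=
  (∀ v, f v ≤ 2) ∧ ∀ v, f v = 0 → ∃ u, G.Adj v u ∧ f u = 2

/-- The Roman domination number of `G`. -/
noncomputable def romanDom {V : Type*} [Fintype V] (G : SimpleGraph V) : ℕ :=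
  sInf {w | ∃ f, IsRDF G f ∧ ∑ v, f v = w}

/-- The Roman domination number of the vertex-deleted graph `G - v`. -/
noncomputable def romanDomDel {V : Type*} [Fintype V] [DecidableEq V]
    (G : SimpleGraph V) (v : V) : ℕ :=
  romanDom (G.induce {w | w ≠ v})

/-- The Roman bondage number of `G`. -/
noncomputable def romanBondage {V : Type*} [Fintype V] [DecidableEq V]
    (G : SimpleGraph V) : ℕ :=
  sInf {k | ∃ B : Finset (Sym2 V), ↑B ⊆ G.edgeSet ∧ B.card = k ∧
    romanDom (G.deleteEdges ↑B) ≠ romanDom G}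

/-- In a connected graph with at least two vertices there are
vertices `u, v` at distance `1` or `2` with `d(u) + d(v) ≤ 2 · ad(G)`. -/
theorem stmt5 {V : Type*} [Fintype V] [DecidableEq V] (G : SimpleGraph V)
    [DecidableRel G.Adj] (hc : G.Connected) (hn : 2 ≤ Fintype.card V) :
    ∃ u v : V, (G.dist u v = 1 ∨ G.dist u v = 2) ∧
      (G.degree u + G.degree v : ℝ) ≤
        2 * (2 * G.edgeFinset.card / Fintype.card V) := by
  classical
  by_contra hcon
  push_neg at hcon
  set n := Fintype.card V with hnV
  set ad : ℝ := 2 * G.edgeFinset.card / n with had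
  have hn0 : (0:ℝ) < n := by
    have : (0:ℕ) < n := lt_of_lt_of_le two_pos hn
    exact_mod_cast this
  -- every vertex has a neighbor
  have hnbr : ∀ v : V, ∃ w, G.Adj v w := by
    intro v
    obtain ⟨u, hu⟩ := Fintype.exists_ne_of_one_lt_card (by omega) v
    obtain ⟨p⟩ := hc.preconnected v u
    exact ⟨p.getVert 1, SimpleGraph.Walk.adj_snd
      (SimpleGraph.Walk.not_nil_of_ne (Ne.symm hu))⟩
  -- restated hypothesis for adjacent vertices
  have hadj : ∀ u v, G.Adj u v → 2 * ad < G.degree u + G.degree v := by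
    intro u v h
    exact hcon u v (Or.inl (SimpleGraph.dist_eq_one_iff_adj.mpr h))
  -- restated hypothesis for vertices at distance two
  have hdist2 : ∀ u v, u ≠ v → ¬ G.Adj u v → ∀ w, G.Adj u w → G.Adj w v →
      2 * ad < G.degree u + G.degree v := by
    intro u v huv hna w h1 h2
    have hle : G.dist u v ≤ 2 := by
      have := SimpleGraph.dist_le (SimpleGraph.Walk.cons h1 (SimpleGraph.Walk.cons h2 SimpleGraph.Walk.nil))
      simpa using this
    have h0 : G.dist u v ≠ 0 := fun h => huv (hc.dist_eq_zero_iff.mp h)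
    have h1' : G.dist u v ≠ 1 := fun h => hna (SimpleGraph.dist_eq_one_iff_adj.mp h)
    exact hcon u v (Or.inr (by omega))
  -- degree sum
  have hsum : ∑ v : V, (G.degree v : ℝ) = 2 * G.edgeFinset.card := by
    exact_mod_cast congrArg (Nat.cast : ℕ → ℝ) G.sum_degrees_eq_twice_card_edges
  set A : Finset V := Finset.univ.filter (fun a => (G.degree a : ℝ) ≤ ad) with hA
  -- A is nonempty
  have hAne : A.Nonempty := by
    have hne : Nonempty V := Fintype.card_pos_iff.mp (by omega)
    have huniv : (Finset.univ : Finset V).Nonempty := Finset.univ_nonempty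
    have hle : ∑ v : V, (G.degree v : ℝ) ≤ ∑ _v : V, ad := by
      rw [hsum, Finset.sum_const, Finset.card_univ, nsmul_eq_mul, had]
      field_simp
      exact le_rfl
    obtain ⟨a, _, ha⟩ := Finset.exists_le_of_sum_le huniv hle
    exact ⟨a, by simp [hA, ha]⟩
  -- neighbors of vertices of A have large degree
  have key : ∀ a ∈ A, ∀ b ∈ G.neighborFinset a,
      ad - G.degree a < (G.degree b : ℝ) - ad := by
    intro a ha b hb
    rw [SimpleGraph.mem_neighborFinset] at hb
    have := hadj a b hb
    linarith
  have hAle : ∀ a ∈ A, (G.degree a : ℝ) ≤ ad := by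
    intro a ha; simpa [hA] using (Finset.mem_filter.mp ha).2
  -- neighbors of A-vertices are outside A
  have hUB : ∀ a ∈ A, ∀ b ∈ G.neighborFinset a, b ∉ A := by
    intro a ha b hb hbA
    have h1 := key a ha b hb
    have h2 := hAle a ha
    have h3 := hAle b hbA
    linarith
  -- neighborhoods of distinct A-vertices are disjoint
  have hdisj : (A : Set V).PairwiseDisjoint (fun a => G.neighborFinset a) := by
    intro a ha a' ha' hne
    simp only [Finset.disjoint_left]
    intro b hb hb'
    rw [SimpleGraph.mem_neighborFinset] at hb hb'
    have h2 : 2 * ad < G.degree a + G.degree a' := by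
      by_cases hadj' : G.Adj a a'
      · exact hadj a a' hadj'
      · exact hdist2 a a' hne hadj' b hb hb'.symm
    have := hAle a (by simpa using ha)
    have := hAle a' (by simpa using ha')
    linarith
  set e : V → ℝ := fun v => (G.degree v : ℝ) - ad with he
  have hsum0 : ∑ v : V, e v = 0 := by
    simp only [he, Finset.sum_sub_distrib, hsum, Finset.sum_const, Finset.card_univ,
      nsmul_eq_mul, had]
    field_simp
    rw [← hnV]; ring
  set S : ℝ := ∑ a ∈ A, (ad - (G.degree a : ℝ)) with hS
  have hsplit : ∑ b ∈ Aᶜ, e b = S := by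
    have := Finset.sum_add_sum_compl A e
    have hAe : ∑ a ∈ A, e a = -S := by
      rw [hS, ← Finset.sum_neg_distrib]
      exact Finset.sum_congr rfl (fun a _ => by simp only [he]; ring)
    linarith [this, hsum0]
  set U : Finset V := A.biUnion (fun a => G.neighborFinset a) with hU
  have hUsub : U ⊆ Aᶜ := by
    intro b hb
    rw [hU, Finset.mem_biUnion] at hb
    obtain ⟨a, ha, hb⟩ := hb
    exact Finset.mem_compl.mpr (hUB a ha b hb)
  have hcomplnn : ∀ b ∈ Aᶜ, 0 ≤ e b := by
    intro b hb
    rw [Finset.mem_compl, hA, Finset.mem_filter] at hb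
    push_neg at hb
    have : ad < (G.degree b : ℝ) := hb (Finset.mem_univ b)
    simp only [he]; linarith
  have h1 : ∑ b ∈ U, e b ≤ ∑ b ∈ Aᶜ, e b :=
    Finset.sum_le_sum_of_subset_of_nonneg hUsub (fun b hb _ => hcomplnn b hb)
  have h2 : ∑ b ∈ U, e b = ∑ a ∈ A, ∑ b ∈ G.neighborFinset a, e b :=
    Finset.sum_biUnion hdisj
  have h3 : ∀ a ∈ A, (ad - (G.degree a : ℝ)) < ∑ b ∈ G.neighborFinset a, e b := by
    intro a ha
    have hne : (G.neighborFinset a).Nonempty := by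
      obtain ⟨w, hw⟩ := hnbr a
      exact ⟨w, (SimpleGraph.mem_neighborFinset G a w).mpr hw⟩
    have hcard : 1 ≤ (G.neighborFinset a).card := Finset.card_pos.mpr hne
    have hstep : (G.neighborFinset a).card • (ad - (G.degree a : ℝ)) <
        ∑ b ∈ G.neighborFinset a, e b := by
      rw [← Finset.sum_const]
      exact Finset.sum_lt_sum_of_nonempty hne (fun b hb => by
        simpa [he] using key a ha b hb)
    have hnn : 0 ≤ ad - (G.degree a : ℝ) := by
      have := hAle a ha; linarith
    calc ad - (G.degree a : ℝ) = 1 * (ad - (G.degree a : ℝ)) := by ring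
      _ ≤ ((G.neighborFinset a).card : ℝ) * (ad - (G.degree a : ℝ)) := by
          apply mul_le_mul_of_nonneg_right _ hnn
          exact_mod_cast hcard
      _ = (G.neighborFinset a).card • (ad - (G.degree a : ℝ)) := by
          rw [nsmul_eq_mul]
      _ < _ := hstep
  have h4 : S < ∑ a ∈ A, ∑ b ∈ G.neighborFinset a, e b := by
    rw [hS]
    exact Finset.sum_lt_sum_of_nonempty hAne h3
  linarith [h1, h2 ▸ h4, hsplit]
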